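/- Let A be a unital C*-algebra and b_1, …, b_n positive elements of A such that 1_A is Cuntz subequivalent to b_1 ⊕ ⋯ ⊕ b_n (i.e., Σ⟨b_j⟩ ≥ ⟨1_A⟩ in Cu(A)). Then there exist ε > 0 and contractions y_1, …, y_n in A with Σ_{j=1}^n y_j* h_ε(b_j) y_j = 1_A, where h_ε : ℝ⁺ → [0,1] is continuous with h_ε(0) = 0 and h_ε(t) = 1 for t ≥ ε. -/

import Mathlib

set_option maxHeartbeats 2000000 in
/-- Let `A` be a unital C*-algebra and `b 1, …, b n` positive elements
such that `1_A` is Cuntz subequivalent to `b 1 ⊕ ⋯ ⊕ b n`.  Then there are `ε > 0` and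
contractions `y 1, …, y n` in `A` with `∑ j, (y j)* h_ε(b j) (y j) = 1`, where
`h_ε : ℝ⁺ → [0,1]` is any continuous function with `h_ε 0 = 0` and `h_ε t = 1` for
`t ≥ ε`. -/
theorem cuntz_dominates_unit_exact {A : Type*} [CStarAlgebra A] [PartialOrder A]
    [StarOrderedRing A]
    (n : ℕ) (b : Fin n → A) (hb : ∀ j, 0 ≤ b j)
    (hsub : ∃ d : ℕ → Fin n → A,
      Filter.Tendsto (fun k => ∑ j, star (d k j) * b j * d k j)
        Filter.atTop (nhds (1 : A))) :
    ∃ ε > (0 : ℝ), ∃ y : Fin n → A, (∀ j, ‖y j‖ ≤ 1) ∧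
      ∀ h : ℝ → ℝ, Continuous h → h 0 = 0 → (∀ t : ℝ, ε ≤ t → h t = 1) →
        (∀ t : ℝ, 0 ≤ t → h t ∈ Set.Icc (0 : ℝ) 1) →
        ∑ j, star (y j) * cfc h (b j) * y j = 1 := by
  rcases subsingleton_or_nontrivial A with hA | hA
  · exact ⟨1, one_pos, fun _ => 0, fun j => by simp,
      fun h _ _ _ _ => Subsingleton.elim _ _⟩
  obtain ⟨d, hd⟩ := hsub
  obtain ⟨k, hk⟩ := Metric.tendsto_atTop.mp hd (1/4) (by norm_num)
  set e : Fin n → A := d k with he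
  have hx1 : ‖(∑ j, star (e j) * b j * e j) - 1‖ < 1/4 := by
    simpa [dist_eq_norm, he] using hk k le_rfl
  set C : ℝ := ∑ j, ‖e j‖^2 with hC
  have hC0 : 0 ≤ C := Finset.sum_nonneg fun j _ => sq_nonneg _
  set ε : ℝ := 1 / (4 * (C + 1)) with hεdef
  have hε : 0 < ε := by
    rw [hεdef]; exact div_pos one_pos (by nlinarith)
  have hbsa : ∀ j, IsSelfAdjoint (b j) := fun j => .of_nonneg (hb j)
  have hspec : ∀ j, ∀ t ∈ spectrum ℝ (b j), 0 ≤ t :=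
    fun j t ht => spectrum_nonneg_of_nonneg (hb j) ht
  set g : ℝ → ℝ := fun t => max (t - ε) 0 with hgdef
  have hgc : Continuous g := (continuous_id.sub continuous_const).max continuous_const
  set G : Fin n → A := fun j => cfc g (b j) with hGdef
  have hGpos : ∀ j, 0 ≤ G j := fun j => cfc_nonneg fun t _ => le_max_right _ _
  have hGnear : ∀ j, ‖b j - G j‖ ≤ ε := by
    intro j
    have h1 : b j - G j = cfc (fun t : ℝ => t - g t) (b j) := by
      rw [cfc_sub (fun t : ℝ => t) g (b j) continuousOn_id hgc.continuousOn,
        cfc_id' ℝ (b j)]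
    rw [h1]
    refine norm_cfc_le hε.le fun t ht => ?_
    have ht0 := hspec j t ht
    simp only [hgdef, Real.norm_eq_abs]
    rcases le_total t ε with hc | hc
    · rw [max_eq_right (by linarith), abs_le]; constructor <;> linarith
    · rw [max_eq_left (by linarith), abs_le]; constructor <;> linarith
  set z : A := ∑ j, star (e j) * G j * e j with hzdef
  have hz0 : 0 ≤ z := Finset.sum_nonneg fun j _ => star_left_conjugate_nonneg (hGpos j) _
  have hzsa : IsSelfAdjoint z := .of_nonneg hz0
  have hCε : C * ε ≤ 1/4 := by
    rw [hεdef, mul_one_div, div_le_div_iff₀ (by nlinarith) (by norm_num)]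
    nlinarith
  have hznear : ‖z - 1‖ < 1 := by
    have h2 : ‖z - ∑ j, star (e j) * b j * e j‖ ≤ C * ε := by
      have h3 : z - ∑ j, star (e j) * b j * e j = ∑ j, star (e j) * (G j - b j) * e j := by
        rw [hzdef, ← Finset.sum_sub_distrib]
        exact Finset.sum_congr rfl fun j _ => by noncomm_ring
      rw [h3]
      calc ‖∑ j, star (e j) * (G j - b j) * e j‖
          ≤ ∑ j, ‖star (e j) * (G j - b j) * e j‖ := norm_sum_le _ _
        _ ≤ ∑ j, ‖e j‖^2 * ε := by
            refine Finset.sum_le_sum fun j _ => ?_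
            calc ‖star (e j) * (G j - b j) * e j‖
                ≤ ‖star (e j) * (G j - b j)‖ * ‖e j‖ := norm_mul_le _ _
              _ ≤ ‖star (e j)‖ * ‖G j - b j‖ * ‖e j‖ :=
                  mul_le_mul_of_nonneg_right (norm_mul_le _ _) (norm_nonneg _)
              _ ≤ ‖e j‖^2 * ε := by
                  rw [norm_star, norm_sub_rev]
                  nlinarith [hGnear j, norm_nonneg (e j), norm_nonneg (b j - G j)]
        _ = C * ε := by rw [hC, Finset.sum_mul]
    have h4 := dist_triangle z (∑ j, star (e j) * b j * e j) 1
    rw [dist_eq_norm, dist_eq_norm, dist_eq_norm] at h4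
    linarith
  have hzu : IsUnit z := by
    refine ⟨Units.oneSub (1 - z) (by rwa [norm_sub_rev] at hznear), ?_⟩
    simp [Units.oneSub]
  have hzspec : ∀ t ∈ spectrum ℝ z, 0 < t := by
    intro t ht
    rcases (spectrum_nonneg_of_nonneg hz0 ht).lt_or_eq with hlt | heq
    · exact hlt
    · exact absurd (heq ▸ ht) ((spectrum.zero_notMem_iff ℝ).mpr hzu)
  set f : ℝ → ℝ := fun t => (Real.sqrt t)⁻¹ with hfdef
  have hfc : ContinuousOn f (spectrum ℝ z) := by
    refine ContinuousOn.inv₀ Real.continuous_sqrt.continuousOn fun t ht => ?_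
    exact (Real.sqrt_pos.mpr (hzspec t ht)).ne'
  set s : A := cfc f z with hsdef
  have hssa : IsSelfAdjoint s := cfc_predicate f z
  have hszs : s * z * s = 1 := by
    rw [hsdef]
    nth_rewrite 2 [← cfc_id ℝ z hzsa]
    rw [← cfc_mul f id z hfc continuousOn_id,
      ← cfc_mul (fun x => f x * id x) f z (hfc.mul continuousOn_id) hfc,
      cfc_congr (g := fun _ : ℝ => (1:ℝ)) ?_, cfc_const_one ℝ z hzsa]
    intro t ht
    have htp := hzspec t ht
    have hst : Real.sqrt t ≠ 0 := (Real.sqrt_pos.mpr htp).ne'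
    simp only [hfdef, id_eq]
    field_simp
    rw [Real.sq_sqrt htp.le]
  set w : Fin n → A := fun j => e j * s with hwdef
  have hwsum : ∑ j, star (w j) * G j * w j = 1 := by
    have h5 : ∑ j, star (w j) * G j * w j = star s * z * s := by
      rw [hzdef, Finset.mul_sum, Finset.sum_mul]
      refine Finset.sum_congr rfl fun j _ => ?_
      simp [hwdef, star_mul, mul_assoc]
    rw [h5, hssa.star_eq, hszs]
  set g' : ℝ → ℝ := fun t => Real.sqrt (max (t - ε) 0) with hg'def
  have hg'c : Continuous g' := Real.continuous_sqrt.comp hgc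
  set y : Fin n → A := fun j => cfc g' (b j) * w j with hydef
  have hy'sa : ∀ j, IsSelfAdjoint (cfc g' (b j)) := fun j => cfc_predicate g' (b j)
  have hkey : ∀ h : ℝ → ℝ, Continuous h → (∀ t : ℝ, ε ≤ t → h t = 1) →
      ∀ j, star (y j) * cfc h (b j) * y j = star (w j) * G j * w j := by
    intro h hhc hh1 j
    have e1 : cfc g' (b j) * cfc h (b j) * cfc g' (b j) = G j := by
      simp only [hGdef]
      rw [← cfc_mul g' h (b j) hg'c.continuousOn hhc.continuousOn,
        ← cfc_mul (fun x => g' x * h x) g' (b j) ((hg'c.mul hhc).continuousOn) hg'c.continuousOn]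
      refine cfc_congr fun t ht => ?_
      have ht0 := hspec j t ht
      by_cases hte : ε ≤ t
      · simp only [hg'def, hgdef, hh1 t hte, mul_one]
        rw [Real.mul_self_sqrt (le_max_right _ _)]
      · have hm : max (t - ε) 0 = 0 := max_eq_right (by linarith)
        simp [hg'def, hgdef, hm]
    calc star (y j) * cfc h (b j) * y j
        = star (w j) * (cfc g' (b j) * cfc h (b j) * cfc g' (b j)) * w j := by
          simp only [hydef, star_mul, (hy'sa j).star_eq]
          noncomm_ring
      _ = star (w j) * G j * w j := by rw [e1]
  refine ⟨ε, hε, y, ?_, ?_⟩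
  · intro j
    have e2 : star (y j) * y j = star (w j) * G j * w j := by
      have h6 := hkey (fun _ => (1:ℝ)) continuous_const (fun _ _ => rfl) j
      rw [cfc_const_one ℝ (b j) (hbsa j)] at h6
      simpa [mul_one] using h6
    have h1 : star (y j) * y j ≤ 1 := by
      rw [e2, ← hwsum]
      exact Finset.single_le_sum (f := fun i => star (w i) * G i * w i)
        (fun i _ => star_left_conjugate_nonneg (hGpos i) _) (Finset.mem_univ j)
    have h7 := CStarAlgebra.norm_le_norm_of_nonneg_of_le (star_mul_self_nonneg _) h1
    rw [CStarRing.norm_star_mul_self, norm_one] at h7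
    nlinarith [norm_nonneg (y j)]
  · intro h hhc _ hh1 _
    rw [← hwsum]
    exact Finset.sum_congr rfl fun j _ => hkey h hhc hh1 j
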